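/- Let ∇ be a real m×N matrix whose null space is exactly the span of the all-ones vector 1 ∈ ℝ^N, let A be a symmetric positive definite m×m real matrix, and set C = ∇ᵀ A ∇. Let S be any nonempty finite set of indices in {1,…,N}, and let C_S be the matrix obtained from C by successively applying, for each i ∈ S, the masking operation that sets the i-th row and i-th column to zero and the (i,i) diagonal entry to 1. Then C_S is symmetric positive definite. (This is the paper's main theorem that the boundary-conditioned linear systems C_u, C_v, C_w are SPD.) -/

import Mathlib

open Matrix

def maskMatrix {N : ℕ} (M : Matrix (Fin N) (Fin N) ℝ) (i : Fin N) :
    Matrix (Fin N) (Fin N) ℝ :=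
  Matrix.of fun k l =>
    if k = i ∧ l = i then 1 else if k = i ∨ l = i then 0 else M k l

lemma mask_quadform {N : ℕ} (M : Matrix (Fin N) (Fin N) ℝ) (i : Fin N) (x : Fin N → ℝ) :
    x ⬝ᵥ (maskMatrix M i).mulVec x
      = (Function.update x i 0) ⬝ᵥ M.mulVec (Function.update x i 0) + x i * x i := by
  classical
  have h : ∀ (Q : Matrix (Fin N) (Fin N) ℝ) (y : Fin N → ℝ),
      y ⬝ᵥ Q.mulVec y = ∑ k, ∑ l, y k * Q k l * y l := by
    intro Q y
    simp [dotProduct, mulVec, Finset.mul_sum, mul_assoc, mul_comm, mul_left_comm]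
  rw [h, h]
  have key : ∀ k l, x k * maskMatrix M i k l * x l
      = (Function.update x i 0 k * M k l * Function.update x i 0 l)
        + (if k = i ∧ l = i then x i * x i else 0) := by
    intro k l
    simp only [maskMatrix, Matrix.of_apply, Function.update_apply]
    split_ifs <;> first | tauto | (subst_vars; ring)
  simp only [key, Finset.sum_add_distrib]
  congr 1
  have : ∀ k : Fin N, (∑ l, if k = i ∧ l = i then x i * x i else 0)
      = if k = i then x i * x i else 0 := by
    intro k
    by_cases hk : k = i <;> simp [hk]
  simp [this]

lemma mask_isHermitian {N : ℕ} {M : Matrix (Fin N) (Fin N) ℝ} (hM : M.IsHermitian)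
    (i : Fin N) : (maskMatrix M i).IsHermitian := by
  ext k l
  simp only [conjTranspose_apply, maskMatrix, Matrix.of_apply, star_trivial]
  have := hM.apply k l
  simp only [star_trivial] at this
  split_ifs <;> first | rfl | tauto | exact this

lemma mask_posDef {N : ℕ} {M : Matrix (Fin N) (Fin N) ℝ} (hM : M.PosDef) (i : Fin N) :
    (maskMatrix M i).PosDef := by
  refine PosDef.of_dotProduct_mulVec_pos (mask_isHermitian hM.1 i) fun x hx => ?_
  simp only [RCLike.re_to_real, star_trivial]
  rw [mask_quadform]
  by_cases hx' : Function.update x i 0 = 0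
  · have hxi : x i ≠ 0 := by
      intro h
      apply hx
      funext k
      by_cases hk : k = i
      · simp [hk, h]
      · have := congrFun hx' k
        simpa [Function.update_apply, hk] using this
    have h1 : (Function.update x i 0) ⬝ᵥ M.mulVec (Function.update x i 0) = 0 := by
      simp [hx']
    rw [h1, zero_add]
    exact mul_self_pos.mpr hxi
  · have := hM.dotProduct_mulVec_pos hx'
    simp only [RCLike.re_to_real, star_trivial] at this
    nlinarith [sq_nonneg (x i)]

lemma foldl_mask_posDef {N : ℕ} (l : List (Fin N)) (M : Matrix (Fin N) (Fin N) ℝ)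
    (hM : M.PosDef) : (l.foldl maskMatrix M).PosDef := by
  induction l generalizing M with
  | nil => exact hM
  | cons a t ih => exact ih _ (mask_posDef hM a)

lemma first_mask_posDef
    {m N : ℕ}
    (grad : Matrix (Fin m) (Fin N) ℝ)
    (hker : ∀ x : Fin N → ℝ, grad.mulVec x = 0 ↔ ∃ c : ℝ, x = c • (fun _ => (1 : ℝ)))
    (A : Matrix (Fin m) (Fin m) ℝ) (hA : A.PosDef) (i : Fin N) :
    (maskMatrix (gradᵀ * A * grad) i).PosDef := by
  have hgt : gradᴴ = gradᵀ := by ext k l; simp [conjTranspose_apply]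
  have hC : (gradᵀ * A * grad).IsHermitian := by
    rw [← hgt]; exact Matrix.isHermitian_conjTranspose_mul_mul grad hA.1
  refine PosDef.of_dotProduct_mulVec_pos (mask_isHermitian hC i) fun x hx => ?_
  simp only [RCLike.re_to_real, star_trivial]
  rw [mask_quadform]
  set u := Function.update x i 0 with hu
  have hquad : u ⬝ᵥ (gradᵀ * A * grad).mulVec u
      = (grad.mulVec u) ⬝ᵥ A.mulVec (grad.mulVec u) := by
    rw [← Matrix.mulVec_mulVec, ← Matrix.mulVec_mulVec, Matrix.dotProduct_mulVec,
        Matrix.vecMul_transpose]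
  by_cases hu0 : u = 0
  · have hxi : x i ≠ 0 := by
      intro h
      apply hx
      funext k
      by_cases hk : k = i
      · simp [hk, h]
      · have := congrFun hu0 k
        simpa [hu, Function.update_apply, hk] using this
    rw [hquad, hu0]
    simpa using mul_self_pos.mpr hxi
  · have hgu : grad.mulVec u ≠ 0 := by
      intro h
      obtain ⟨c, hc⟩ := (hker u).mp h
      have hci : u i = 0 := by simp [hu]
      rw [hc] at hci
      simp at hci
      apply hu0
      rw [hc, hci]
      funext k; simp
    have := hA.dotProduct_mulVec_pos hgu
    simp only [RCLike.re_to_real, star_trivial] at this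
    rw [hquad]
    nlinarith [this, sq_nonneg (x i)]

/-- Let `∇` be a real `m × N` matrix whose null space is the span of the
all-ones vector, `A` a symmetric positive definite `m × m` matrix, and `C = ∇ᵀ A ∇`. For any
nonempty set `S` of indices, the matrix obtained from `C` by successively masking at each
index of `S` is symmetric positive definite. -/
theorem successive_masking_posDef
    {m N : ℕ} (hN : 0 < N)
    (grad : Matrix (Fin m) (Fin N) ℝ)
    (hker : ∀ x : Fin N → ℝ, grad.mulVec x = 0 ↔ ∃ c : ℝ, x = c • (fun _ => (1 : ℝ)))
    (A : Matrix (Fin m) (Fin m) ℝ) (hA : A.PosDef)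
    (S : Finset (Fin N)) (hS : S.Nonempty)
    (l : List (Fin N)) (hl : l.Nodup) (hlS : l.toFinset = S) :
    (l.foldl maskMatrix (gradᵀ * A * grad)).PosDef := by
  cases l with
  | nil =>
    exfalso
    rw [← hlS] at hS
    simp at hS
  | cons a t =>
    exact foldl_mask_posDef t _ (first_mask_posDef grad hker A hA a)
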